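/- For the polynomial P_3(z) = z + (2/√5)z² + (1/2)(1 − 1/√5)z³ and every real t, one has |P_3(e^{it})| ≥ (3 − √5)/2, with equality when t = π. -/

import Mathlib

/-- The polynomial `P₃(z) = z + (2/√5)z² + (1/2)(1 − 1/√5)z³`. -/
noncomputable def P3 (z : ℂ) : ℂ :=
  z + ((2 / Real.sqrt 5 : ℝ) : ℂ) * z ^ 2 +
    (((1 / 2) * (1 - 1 / Real.sqrt 5) : ℝ) : ℂ) * z ^ 3

lemma P3_coef1 : (2 / Real.sqrt 5 : ℝ) = 2 * Real.sqrt 5 / 5 := by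
  have hs : Real.sqrt 5 ^ 2 = 5 := Real.sq_sqrt (by norm_num)
  have hs0 : (0:ℝ) < Real.sqrt 5 := Real.sqrt_pos.mpr (by norm_num)
  rw [div_eq_div_iff hs0.ne' (by norm_num)]
  nlinarith

lemma P3_coef2 : ((1 / 2) * (1 - 1 / Real.sqrt 5) : ℝ) = (5 - Real.sqrt 5) / 10 := by
  have hs : Real.sqrt 5 ^ 2 = 5 := Real.sq_sqrt (by norm_num)
  have hs0 : (0:ℝ) < Real.sqrt 5 := Real.sqrt_pos.mpr (by norm_num)
  have h1 : (1 / Real.sqrt 5 : ℝ) = Real.sqrt 5 / 5 := by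
    rw [div_eq_div_iff hs0.ne' (by norm_num)]
    nlinarith
  rw [h1]; ring

lemma P3_normSq (c d : ℝ) (h : c ^ 2 + d ^ 2 = 1) :
    Complex.normSq (P3 ((c : ℂ) + (d : ℂ) * Complex.I)) =
      (11 + Real.sqrt 5) / 10 + (6 * Real.sqrt 5 - 2) / 5 * c
        + (2 - 2 * Real.sqrt 5 / 5) * c ^ 2 := by
  have hs : Real.sqrt 5 ^ 2 = 5 := Real.sq_sqrt (by norm_num)
  set s := Real.sqrt 5 with hsdef
  simp only [P3, P3_coef1, P3_coef2, Complex.normSq_apply, Complex.add_re, Complex.add_im,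
    Complex.mul_re, Complex.mul_im, Complex.ofReal_re, Complex.ofReal_im, Complex.I_re,
    Complex.I_im, pow_succ, pow_zero, one_mul]
  ring_nf
  linear_combination (1/4 + s/10 + 17/100*s^2 - 3/4*d^2 + 1/10*d^2*s + 17/100*d^2*s^2
    + 1/4*d^4 - 1/10*d^4*s + 1/100*d^4*s^2 + 6/5*c*s - 2/25*c*s^2 + 2/5*c*d^2*s
    - 2/25*c*d^2*s^2 + 5/4*c^2 - 3/10*c^2*s + 17/100*c^2*s^2 + 1/2*c^2*d^2
    - 1/5*c^2*d^2*s + 1/50*c^2*d^2*s^2 + 2/5*c^3*s - 2/25*c^3*s^2 + 1/4*c^4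
    - 1/10*c^4*s + 1/100*c^4*s^2) * h + (17/100 - 2/25*c) * hs

theorem stmt13 :
    (∀ t : ℝ, (3 - Real.sqrt 5) / 2 ≤ ‖P3 (Complex.exp (Complex.I * t))‖) ∧
      ‖P3 (Complex.exp (Complex.I * Real.pi))‖ = (3 - Real.sqrt 5) / 2 := by
  have hs : Real.sqrt 5 ^ 2 = 5 := Real.sq_sqrt (by norm_num)
  have hs0 : (0:ℝ) ≤ Real.sqrt 5 := Real.sqrt_nonneg 5
  have hs3 : Real.sqrt 5 ≤ 3 := by nlinarith
  have hs22 : (22:ℝ)/10 ≤ Real.sqrt 5 := by nlinarith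
  constructor
  · intro t
    have hw : Complex.exp (Complex.I * t) =
        ((Real.cos t : ℂ) + (Real.sin t : ℂ) * Complex.I) := by
      rw [mul_comm, Complex.exp_mul_I, ← Complex.ofReal_cos, ← Complex.ofReal_sin]
    have hkey := P3_normSq (Real.cos t) (Real.sin t)
      (by rw [← Real.cos_sq_add_sin_sq t])
    rw [hw, Complex.norm_def, hkey]
    set s := Real.sqrt 5
    set x := Real.cos t with hx
    have hc1 : -1 ≤ x := Real.neg_one_le_cos t
    have hc2 : x ≤ 1 := Real.cos_le_one t
    have hnn : (0:ℝ) ≤ (3 - s) / 2 := by linarith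
    rw [show (3 - s)/2 = Real.sqrt (((3 - s)/2)^2) from (Real.sqrt_sq hnn).symm]
    apply Real.sqrt_le_sqrt
    have t1 : 0 ≤ (10 - 2*s) * (x + 1)^2 :=
      mul_nonneg (by linarith) (sq_nonneg _)
    have t2 : 0 ≤ (10*s - 22) * (x + 1) :=
      mul_nonneg (by linarith) (by linarith)
    nlinarith [t1, t2, hs]
  · rw [mul_comm, Complex.exp_pi_mul_I]
    have hP : P3 (-1) = (((Real.sqrt 5 - 3) / 2 : ℝ) : ℂ) := by
      have hsc : ((Real.sqrt 5 : ℂ)) ^ 2 = 5 := by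
        norm_cast
      have hne : (Real.sqrt 5 : ℂ) ≠ 0 := by
        simp only [ne_eq, Complex.ofReal_eq_zero]
        positivity
      simp only [P3]
      push_cast
      field_simp
      ring_nf
      linear_combination (-1 : ℂ) * hsc
    rw [hP, Complex.norm_real, Real.norm_eq_abs, abs_of_nonpos (by linarith)]
    ring
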